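/- Consider the blind MDP with state space S = {s0, s1, bot, top} and action set A = {w, c}, with transitions: δ(s0,w) gives probability 1/2 to s0 and 1/2 to s1; δ(s1,w) = point mass at s1; δ(s0,c) = point mass at bot; δ(s1,c) = point mass at top; and bot and top are absorbing under both actions. Then the supremum over all probability distributions σ on A of ReachProb(P_σ, top, s0) equals 1, i.e., this blind MDP is limit-sure winning for the reachability objective under memoryless policies. -/

import Mathlib

open scoped BigOperators

/-- States of the example blind MDP. -/
inductive St | s0 | s1 | bot | top
  deriving DecidableEq

instance : Fintype St := ⟨{St.s0, St.s1, St.bot, St.top}, fun x => by cases x <;> simp⟩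

/-- Actions: wait and commit. -/
inductive Act | w | c
  deriving DecidableEq

instance : Fintype Act := ⟨{Act.w, Act.c}, fun x => by cases x <;> simp⟩

/-- Iterates whose supremum is the reachability probability. -/
noncomputable def reachAux {S : Type*} [Fintype S] [DecidableEq S]
    (P : S → S → ℝ) (t : S) : ℕ → S → ℝ
  | 0, x => if x = t then 1 else 0
  | n + 1, x => if x = t then 1 else ∑ y, P x y * reachAux P t n y

/-- Reachability probability of target `t` starting from `s` in the Markov chain `P`. -/
noncomputable def ReachProb {S : Type*} [Fintype S] [DecidableEq S]
    (P : S → S → ℝ) (t s : S) : ℝ :=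
  ⨆ n : ℕ, reachAux P t n s

/-- Transition function of the example blind MDP. -/
noncomputable def d : St → Act → St → ℝ
  | St.s0, Act.w, St.s0 => 1/2
  | St.s0, Act.w, St.s1 => 1/2
  | St.s1, Act.w, St.s1 => 1
  | St.s0, Act.c, St.bot => 1
  | St.s1, Act.c, St.top => 1
  | St.bot, _, St.bot => 1
  | St.top, _, St.top => 1
  | _, _, _ => 0

lemma sum_St (f : St → ℝ) : ∑ y, f y = f .s0 + f .s1 + f .bot + f .top := by
  rw [show (Finset.univ : Finset St) = {St.s0, St.s1, St.bot, St.top} from by decide]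
  simp [Finset.sum_insert, Finset.mem_insert]
  ring

lemma sum_Act (f : Act → ℝ) : ∑ a, f a = f .w + f .c := by
  rw [show (Finset.univ : Finset Act) = {Act.w, Act.c} from by decide]
  simp

lemma d_nonneg : ∀ s a s', (0:ℝ) ≤ d s a s' := by
  intro s a s'
  cases s <;> cases a <;> cases s' <;> simp [d] <;> norm_num

lemma d_row : ∀ s a, ∑ s', d s a s' = 1 := by
  intro s a
  cases s <;> cases a <;> rw [sum_St] <;> simp [d] <;> norm_num

lemma reachAux_le_one {S : Type*} [Fintype S] [DecidableEq S]
    (P : S → S → ℝ) (t : S) (hnn : ∀ x y, 0 ≤ P x y) (hrow : ∀ x, ∑ y, P x y = 1) :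
    ∀ n x, reachAux P t n x ≤ 1 := by
  intro n
  induction n with
  | zero => intro x; simp only [reachAux]; split_ifs <;> norm_num
  | succ n ih =>
    intro x
    simp only [reachAux]
    split_ifs with h
    · exact le_refl 1
    · calc ∑ y, P x y * reachAux P t n y ≤ ∑ y, P x y * 1 :=
            Finset.sum_le_sum fun y _ => mul_le_mul_of_nonneg_left (ih y) (hnn x y)
        _ = 1 := by simp [hrow]

/-- The policy matrix for parameter `p` (probability of committing). -/
noncomputable def Pp (p : ℝ) : St → St → ℝ :=
  fun s s' => ∑ a, (fun a => match a with | Act.w => 1 - p | Act.c => p) a * d s a s'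

lemma Pp_eq (p : ℝ) (s s' : St) : Pp p s s' = (1 - p) * d s .w s' + p * d s .c s' := by
  simp [Pp, sum_Act]

lemma reach_top (p : ℝ) : ∀ n, reachAux (Pp p) St.top n St.top = 1 := by
  intro n; cases n <;> simp [reachAux]

lemma reach_bot (p : ℝ) : ∀ n, reachAux (Pp p) St.top n St.bot = 0 := by
  intro n
  induction n with
  | zero => simp [reachAux]
  | succ n ih =>
    simp only [reachAux, if_neg (by simp : St.bot ≠ St.top)]
    rw [sum_St]
    simp only [Pp_eq, d, ih]
    ring

lemma reach_s1 (p : ℝ) : ∀ n, reachAux (Pp p) St.top n St.s1 = 1 - (1 - p)^n := by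
  intro n
  induction n with
  | zero => simp [reachAux]
  | succ n ih =>
    simp only [reachAux, if_neg (by simp : St.s1 ≠ St.top)]
    rw [sum_St]
    simp only [Pp_eq, d, ih, reach_top, reach_bot]
    ring

lemma reach_s0 (p : ℝ) (hp0 : 0 ≤ p) (hp1 : p ≤ 1) :
    ∀ n, (1 - p)/(1 + p) - (1 - p)^n ≤ reachAux (Pp p) St.top n St.s0 := by
  intro n
  induction n with
  | zero =>
    simp only [reachAux, if_neg (by simp : St.s0 ≠ St.top), pow_zero]
    have : (1 - p)/(1 + p) ≤ 1 := by
      rw [div_le_one (by linarith : (0:ℝ) < 1 + p)]; linarith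
    linarith
  | succ n ih =>
    simp only [reachAux, if_neg (by simp : St.s0 ≠ St.top)]
    rw [sum_St]
    simp only [Pp_eq, d, reach_s1, reach_bot, reach_top]
    have hs : (0:ℝ) ≤ (1 - p)^n := pow_nonneg (by linarith) n
    have h1 : (0:ℝ) < 1 + p := by linarith
    have key := mul_le_mul_of_nonneg_left ih (show (0:ℝ) ≤ (1 - p)/2 by linarith)
    have hid : (1 - p)/2 * ((1 - p)/(1 + p) - (1 - p)^n) + (1 - p)/2 * (1 - (1 - p)^n)
        = (1 - p)/(1 + p) - (1 - p)^(n + 1) := by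
      field_simp
      ring
    nlinarith [key, hid, hs]

theorem limitSure_example :
    sSup {x : ℝ | ∃ σ : Act → ℝ, (∀ a, 0 ≤ σ a) ∧ (∑ a, σ a) = 1 ∧
      x = ReachProb (fun s s' => ∑ a, σ a * d s a s') St.top St.s0} = 1 := by
  set T := {x : ℝ | ∃ σ : Act → ℝ, (∀ a, 0 ≤ σ a) ∧ (∑ a, σ a) = 1 ∧
      x = ReachProb (fun s s' => ∑ a, σ a * d s a s') St.top St.s0} with hT
  -- every element of T is at most 1
  have hub : ∀ x ∈ T, x ≤ 1 := by
    rintro x ⟨σ, hσ0, hσ1, rfl⟩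
    have hnn : ∀ s s', 0 ≤ ∑ a, σ a * d s a s' := fun s s' =>
      Finset.sum_nonneg fun a _ => mul_nonneg (hσ0 a) (d_nonneg s a s')
    have hrow : ∀ s, ∑ s', ∑ a, σ a * d s a s' = 1 := by
      intro s
      rw [Finset.sum_comm]
      simp_rw [← Finset.mul_sum, d_row]
      simpa using hσ1
    exact ciSup_le fun n => reachAux_le_one _ _ hnn hrow n _
  have hbdd : BddAbove T := ⟨1, hub⟩
  -- membership of the parametric policy, and lower estimate
  have hmem : ∀ p : ℝ, 0 ≤ p → p ≤ 1 →
      ReachProb (Pp p) St.top St.s0 ∈ T := by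
    intro p hp0 hp1
    refine ⟨fun a => match a with | Act.w => 1 - p | Act.c => p, ?_, ?_, rfl⟩
    · intro a; cases a <;> simp <;> linarith
    · rw [sum_Act]; ring
  have hge : ∀ p : ℝ, 0 < p → p ≤ 1 →
      (1 - p)/(1 + p) ≤ ReachProb (Pp p) St.top St.s0 := by
    intro p hp0 hp1
    have hb : BddAbove (Set.range fun n => reachAux (Pp p) St.top n St.s0) := by
      refine ⟨1, ?_⟩
      rintro x ⟨n, rfl⟩
      refine reachAux_le_one _ _ ?_ ?_ n _
      · intro s s'; rw [Pp_eq]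
        have := d_nonneg s Act.w s'
        have := d_nonneg s Act.c s'
        nlinarith
      · intro s
        simp_rw [Pp_eq]
        rw [Finset.sum_add_distrib, ← Finset.mul_sum, ← Finset.mul_sum, d_row, d_row]
        ring
    have hlim : Filter.Tendsto (fun n : ℕ => (1 - p)/(1 + p) - (1 - p)^n)
        Filter.atTop (nhds ((1 - p)/(1 + p))) := by
      have : Filter.Tendsto (fun n : ℕ => (1 - p)^n) Filter.atTop (nhds 0) :=
        tendsto_pow_atTop_nhds_zero_of_lt_one (by linarith) (by linarith)
      simpa using Filter.Tendsto.const_sub ((1 - p)/(1 + p)) this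
    refine le_of_tendsto' hlim fun n => ?_
    exact le_trans (reach_s0 p (le_of_lt hp0) hp1 n) (le_ciSup hb n)
  -- conclude
  refine le_antisymm (csSup_le ⟨_, hmem (1/2) (by norm_num) (by norm_num)⟩ hub) ?_
  refine le_of_forall_pos_le_add fun ε hε => ?_
  set p := min (ε/2) (1/2) with hp
  have hp0 : 0 < p := lt_min (by linarith) (by norm_num)
  have hp1 : p ≤ 1 := le_trans (min_le_right _ _) (by norm_num)
  have hpe : p ≤ ε/2 := min_le_left _ _
  have h1 : (1:ℝ) - ε ≤ (1 - p)/(1 + p) := by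
    rw [le_div_iff₀ (by linarith)]
    nlinarith
  calc (1:ℝ) ≤ (1 - p)/(1 + p) + ε := by linarith
    _ ≤ ReachProb (Pp p) St.top St.s0 + ε := by linarith [hge p hp0 hp1]
    _ ≤ sSup T + ε := by
        have := le_csSup hbdd (hmem p (le_of_lt hp0) hp1)
        linarith
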